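/- Let R ∈ ℝ^{m×n} have every entry of absolute value at most C, let K := C/(1−β), and let T ≥ 1. Then the map π ↦ V_T(π,R) from the metric space (Π_MR, μ) to (ℝ^m, ‖·‖_∞) is Lipschitz continuous with Lipschitz constant K(δ^T − β^T)/(δ^{T−1}(δ − β)); that is, ‖V_T(π₁,R) − V_T(π₂,R)‖_∞ ≤ [K(δ^T − β^T)/(δ^{T−1}(δ − β))] · μ(π₁,π₂) for all policies π₁, π₂. -/

import Mathlib

open Finset Filter Matrix

/-- A row-stochastic matrix (decision rule): nonnegative entries, each row sums to 1. -/
def IsStoch (m n : ℕ) (d : Matrix (Fin m) (Fin n) ℝ) : Prop :=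
  (∀ s a, 0 ≤ d s a) ∧ ∀ s, ∑ a, d s a = 1

/-- Valid transition probabilities `p s a s' = p(s'|s,a)`. -/
def IsTransKer (m n : ℕ) (p : Fin m → Fin n → Fin m → ℝ) : Prop :=
  (∀ s a s', 0 ≤ p s a s') ∧ ∀ s a, ∑ s', p s a s' = 1

/-- Max absolute entry norm on vectors. -/
noncomputable def vecNorm {m : ℕ} (v : Fin m → ℝ) : ℝ := ⨆ i, |v i|

/-- Maximum absolute row-sum norm on matrices. -/
noncomputable def rowSumNorm {m n : ℕ} (B : Matrix (Fin m) (Fin n) ℝ) : ℝ :=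
  ⨆ i, ∑ j, |B i j|

/-- Max absolute entry norm on matrices. -/
noncomputable def maxNorm {m n : ℕ} (B : Matrix (Fin m) (Fin n) ℝ) : ℝ :=
  ⨆ i, ⨆ j, |B i j|

/-- `(R_d)_s = ∑_a R(s,a) d(a|s)`. -/
noncomputable def Rvec {m n : ℕ} (R d : Matrix (Fin m) (Fin n) ℝ) : Fin m → ℝ :=
  fun s => ∑ a, R s a * d s a

/-- `(P_d)_{s,s'} = ∑_a p(s'|s,a) d(a|s)`. -/
noncomputable def Pmat {m n : ℕ} (p : Fin m → Fin n → Fin m → ℝ)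
    (d : Matrix (Fin m) (Fin n) ℝ) : Matrix (Fin m) (Fin m) ℝ :=
  fun s s' => ∑ a, p s a s' * d s a

/-- `P_0^π = I`, `P_{t+1}^π = P_t^π ⬝ P_{d_t}`. -/
noncomputable def Ppi {m n : ℕ} (p : Fin m → Fin n → Fin m → ℝ)
    (π : ℕ → Matrix (Fin m) (Fin n) ℝ) : ℕ → Matrix (Fin m) (Fin m) ℝ
  | 0 => 1
  | t + 1 => Ppi p π t * Pmat p (π t)

/-- Finite-horizon standard discounted cost vector `V_T(π,R)`. -/
noncomputable def VT {m n : ℕ} (β : ℝ) (p : Fin m → Fin n → Fin m → ℝ)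
    (π : ℕ → Matrix (Fin m) (Fin n) ℝ) (R : Matrix (Fin m) (Fin n) ℝ) (T : ℕ) :
    Fin m → ℝ :=
  fun x => ∑ t ∈ Finset.range T, β ^ t * (Ppi p π t *ᵥ Rvec R (π t)) x

/-- Infinite-horizon standard discounted cost vector `V(π,R)`. -/
noncomputable def Vinf {m n : ℕ} (β : ℝ) (p : Fin m → Fin n → Fin m → ℝ)
    (π : ℕ → Matrix (Fin m) (Fin n) ℝ) (R : Matrix (Fin m) (Fin n) ℝ) :
    Fin m → ℝ :=
  fun x => ∑' t : ℕ, β ^ t * (Ppi p π t *ᵥ Rvec R (π t)) x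

/-- `Qrev β γ p π R T k = Q_{T-1-k}^{T,π,R}`, defined by the backward recursion. -/
noncomputable def Qrev {m n : ℕ} (β γ : ℝ) (p : Fin m → Fin n → Fin m → ℝ)
    (π : ℕ → Matrix (Fin m) (Fin n) ℝ) (R : Matrix (Fin m) (Fin n) ℝ) (T : ℕ) :
    ℕ → Matrix (Fin m) (Fin n) ℝ
  | 0 => fun s a => Real.exp (γ * β ^ (T - 1) * R s a)
  | k + 1 => fun s a =>
      Real.exp (γ * β ^ (T - 1 - (k + 1)) * R s a) *
        ∑ s', p s a s' * ∑ a', π (T - 1 - k) s' a' * Qrev β γ p π R T k s' a'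

/-- `Q_t^{T,π,R}` for `0 ≤ t ≤ T-1`. -/
noncomputable def Qmat {m n : ℕ} (β γ : ℝ) (p : Fin m → Fin n → Fin m → ℝ)
    (π : ℕ → Matrix (Fin m) (Fin n) ℝ) (R : Matrix (Fin m) (Fin n) ℝ) (T t : ℕ) :
    Matrix (Fin m) (Fin n) ℝ :=
  Qrev β γ p π R T (T - 1 - t)

/-- Finite-horizon risk-sensitive cost vector `J_T(π,γ,R)`. -/
noncomputable def JT {m n : ℕ} (β γ : ℝ) (p : Fin m → Fin n → Fin m → ℝ)
    (π : ℕ → Matrix (Fin m) (Fin n) ℝ) (R : Matrix (Fin m) (Fin n) ℝ) (T : ℕ) :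
    Fin m → ℝ :=
  fun s => ∑ a, π 0 s a * Qmat β γ p π R T 0 s a

/-- Infinite-horizon risk-sensitive cost `J(π,γ,R)(x) = lim_{T→∞} J_T(π,γ,R)(x)`. -/
noncomputable def Jinf {m n : ℕ} (β γ : ℝ) (p : Fin m → Fin n → Fin m → ℝ)
    (π : ℕ → Matrix (Fin m) (Fin n) ℝ) (R : Matrix (Fin m) (Fin n) ℝ) (x : Fin m) : ℝ :=
  limUnder atTop (fun T => JT β γ p π R T x)

/-- The metric `μ(π₁,π₂) = sup_t δ^t ‖d_t − f_t‖_∞` on Markovian randomized policies. -/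
noncomputable def policyDist {m n : ℕ} (δ : ℝ)
    (π₁ π₂ : ℕ → Matrix (Fin m) (Fin n) ℝ) : ℝ :=
  ⨆ t : ℕ, δ ^ t * rowSumNorm (π₁ t - π₂ t)

section Aux

variable {m n : ℕ}

lemma aux_le_rowSumNorm (B : Matrix (Fin m) (Fin n) ℝ) (s : Fin m) :
    ∑ j, |B s j| ≤ rowSumNorm B := by
  exact le_ciSup (f := fun s : Fin m => ∑ j, |B s j|)
    (Set.Finite.bddAbove (Set.finite_range _)) s

lemma aux_rowSumNorm_nonneg (B : Matrix (Fin m) (Fin n) ℝ) :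
    0 ≤ rowSumNorm B :=
  Real.iSup_nonneg fun s => Finset.sum_nonneg fun j _ => abs_nonneg _

lemma aux_rowSumNorm_le_two (hm : 1 ≤ m) {d f : Matrix (Fin m) (Fin n) ℝ}
    (hd : IsStoch m n d) (hf : IsStoch m n f) : rowSumNorm (d - f) ≤ 2 := by
  have : Nonempty (Fin m) := ⟨⟨0, hm⟩⟩
  refine ciSup_le fun s => ?_
  calc ∑ j, |(d - f) s j| ≤ ∑ j, (d s j + f s j) := by
        refine Finset.sum_le_sum fun j _ => ?_
        have := hd.1 s j; have := hf.1 s j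
        simp only [Matrix.sub_apply]
        rw [abs_sub_le_iff]; constructor <;> linarith
    _ = 2 := by rw [Finset.sum_add_distrib, hd.2 s, hf.2 s]; norm_num

/-- `δ^t * ‖π₁ t − π₂ t‖ ≤ μ(π₁, π₂)`. -/
lemma aux_le_policyDist (hm : 1 ≤ m) {δ : ℝ} (hδ0 : 0 < δ) (hδ1 : δ < 1)
    {π₁ π₂ : ℕ → Matrix (Fin m) (Fin n) ℝ}
    (h₁ : ∀ t, IsStoch m n (π₁ t)) (h₂ : ∀ t, IsStoch m n (π₂ t)) (t : ℕ) :
    δ ^ t * rowSumNorm (π₁ t - π₂ t) ≤ policyDist δ π₁ π₂ := by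
  refine le_ciSup (f := fun t : ℕ => δ ^ t * rowSumNorm (π₁ t - π₂ t)) ⟨2, ?_⟩ t
  rintro x ⟨u, rfl⟩
  calc δ ^ u * rowSumNorm (π₁ u - π₂ u)
      ≤ 1 * 2 := by
        refine mul_le_mul (pow_le_one₀ hδ0.le hδ1.le)
          (aux_rowSumNorm_le_two hm (h₁ u) (h₂ u)) (aux_rowSumNorm_nonneg _)
          zero_le_one
    _ = 2 := one_mul 2

lemma aux_policyDist_nonneg (hm : 1 ≤ m) {δ : ℝ} (hδ0 : 0 < δ)
    (π₁ π₂ : ℕ → Matrix (Fin m) (Fin n) ℝ) : 0 ≤ policyDist δ π₁ π₂ :=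
  Real.iSup_nonneg fun t =>
    mul_nonneg (pow_nonneg hδ0.le t) (aux_rowSumNorm_nonneg _)

/-- Row sums of `Pmat` are 1 and entries nonneg when `d` is stochastic. -/
lemma aux_Pmat_stoch (p : Fin m → Fin n → Fin m → ℝ) (hp : IsTransKer m n p)
    {d : Matrix (Fin m) (Fin n) ℝ} (hd : IsStoch m n d) :
    (∀ s s', 0 ≤ Pmat p d s s') ∧ ∀ s, ∑ s', Pmat p d s s' = 1 := by
  constructor
  · intro s s'
    exact Finset.sum_nonneg fun a _ => mul_nonneg (hp.1 s a s') (hd.1 s a)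
  · intro s
    simp only [Pmat]
    rw [Finset.sum_comm]
    simp_rw [← Finset.sum_mul, hp.2 s, one_mul]
    exact hd.2 s

lemma aux_Ppi_stoch (p : Fin m → Fin n → Fin m → ℝ) (hp : IsTransKer m n p)
    (π : ℕ → Matrix (Fin m) (Fin n) ℝ) (hπ : ∀ t, IsStoch m n (π t)) (t : ℕ) :
    (∀ s s', 0 ≤ Ppi p π t s s') ∧ ∀ s, ∑ s', Ppi p π t s s' = 1 := by
  induction t with
  | zero =>
      constructor
      · intro s s'
        simp only [Ppi, Matrix.one_apply]
        split <;> norm_num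
      · intro s; simp [Ppi, Matrix.one_apply]
  | succ t ih =>
      have hP := aux_Pmat_stoch p hp (hπ t)
      constructor
      · intro s s'
        simp only [Ppi, Matrix.mul_apply]
        exact Finset.sum_nonneg fun y _ => mul_nonneg (ih.1 s y) (hP.1 y s')
      · intro s
        simp only [Ppi, Matrix.mul_apply]
        rw [Finset.sum_comm]
        simp_rw [← Finset.mul_sum, hP.2, mul_one]
        exact ih.2 s

/-- `∑_{s'} |Pmat p d s s' − Pmat p f s s'| ≤ ∑_a |d s a − f s a|`. -/
lemma aux_Pmat_diff (p : Fin m → Fin n → Fin m → ℝ) (hp : IsTransKer m n p)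
    (d f : Matrix (Fin m) (Fin n) ℝ) (s : Fin m) :
    ∑ s', |Pmat p d s s' - Pmat p f s s'| ≤ ∑ a, |d s a - f s a| := by
  calc ∑ s', |Pmat p d s s' - Pmat p f s s'|
      ≤ ∑ s', ∑ a, p s a s' * |d s a - f s a| := by
        refine Finset.sum_le_sum fun s' _ => ?_
        simp only [Pmat, ← Finset.sum_sub_distrib]
        refine (Finset.abs_sum_le_sum_abs _ _).trans ?_
        refine Finset.sum_le_sum fun a _ => ?_
        rw [← mul_sub, abs_mul, abs_of_nonneg (hp.1 s a s')]
    _ = ∑ a, |d s a - f s a| := by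
        rw [Finset.sum_comm]
        simp_rw [← Finset.sum_mul, hp.2 s, one_mul]

/-- Accumulated difference of the products `Ppi`. -/
lemma aux_Ppi_diff (hm : 1 ≤ m) (p : Fin m → Fin n → Fin m → ℝ) (hp : IsTransKer m n p)
    (π₁ π₂ : ℕ → Matrix (Fin m) (Fin n) ℝ)
    (h₁ : ∀ t, IsStoch m n (π₁ t)) (h₂ : ∀ t, IsStoch m n (π₂ t)) (t : ℕ) (x : Fin m) :
    ∑ s', |Ppi p π₁ t x s' - Ppi p π₂ t x s'| ≤
      ∑ k ∈ Finset.range t, rowSumNorm (π₁ k - π₂ k) := by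
  induction t with
  | zero => simp [Ppi]
  | succ t ih =>
      have hP1 := aux_Ppi_stoch p hp π₁ h₁ t
      have hQ2 := aux_Pmat_stoch p hp (h₂ t)
      calc ∑ s', |Ppi p π₁ (t+1) x s' - Ppi p π₂ (t+1) x s'|
          ≤ ∑ s', ∑ y, (Ppi p π₁ t x y * |Pmat p (π₁ t) y s' - Pmat p (π₂ t) y s'|
              + |Ppi p π₁ t x y - Ppi p π₂ t x y| * Pmat p (π₂ t) y s') := by
            refine Finset.sum_le_sum fun s' _ => ?_
            simp only [Ppi, Matrix.mul_apply, ← Finset.sum_sub_distrib]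
            refine (Finset.abs_sum_le_sum_abs _ _).trans ?_
            refine Finset.sum_le_sum fun y _ => ?_
            have : Ppi p π₁ t x y * Pmat p (π₁ t) y s'
                - Ppi p π₂ t x y * Pmat p (π₂ t) y s'
                = Ppi p π₁ t x y * (Pmat p (π₁ t) y s' - Pmat p (π₂ t) y s')
                  + (Ppi p π₁ t x y - Ppi p π₂ t x y) * Pmat p (π₂ t) y s' := by ring
            rw [this]
            refine (abs_add_le _ _).trans ?_
            rw [abs_mul, abs_mul, abs_of_nonneg (hP1.1 x y), abs_of_nonneg (hQ2.1 y s')]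
        _ = ∑ y, Ppi p π₁ t x y * (∑ s', |Pmat p (π₁ t) y s' - Pmat p (π₂ t) y s'|)
              + ∑ y, |Ppi p π₁ t x y - Ppi p π₂ t x y| * (∑ s', Pmat p (π₂ t) y s') := by
            rw [Finset.sum_comm]
            simp_rw [Finset.sum_add_distrib, ← Finset.mul_sum]
        _ ≤ ∑ y, Ppi p π₁ t x y * rowSumNorm (π₁ t - π₂ t)
              + ∑ k ∈ Finset.range t, rowSumNorm (π₁ k - π₂ k) := by
            refine add_le_add (Finset.sum_le_sum fun y _ => ?_) ?_
            · refine mul_le_mul_of_nonneg_left ?_ (hP1.1 x y)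
              refine (aux_Pmat_diff p hp _ _ y).trans ?_
              refine le_trans (le_of_eq ?_) (aux_le_rowSumNorm (π₁ t - π₂ t) y)
              simp [Matrix.sub_apply]
            · simp_rw [hQ2.2, mul_one]; exact ih
        _ = ∑ k ∈ Finset.range (t+1), rowSumNorm (π₁ k - π₂ k) := by
            rw [← Finset.sum_mul, hP1.2 x, one_mul, Finset.sum_range_succ]
            ring

lemma aux_Rvec_abs_le {C : ℝ} (R : Matrix (Fin m) (Fin n) ℝ) (hR : ∀ s a, |R s a| ≤ C)
    {d : Matrix (Fin m) (Fin n) ℝ} (hd : IsStoch m n d) (s : Fin m) :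
    |Rvec R d s| ≤ C := by
  calc |Rvec R d s| ≤ ∑ a, |R s a| * d s a := by
        refine (Finset.abs_sum_le_sum_abs _ _).trans ?_
        refine Finset.sum_le_sum fun a _ => ?_
        rw [abs_mul, abs_of_nonneg (hd.1 s a)]
    _ ≤ ∑ a, C * d s a :=
        Finset.sum_le_sum fun a _ => mul_le_mul_of_nonneg_right (hR s a) (hd.1 s a)
    _ = C := by rw [← Finset.mul_sum, hd.2 s, mul_one]

lemma aux_Rvec_diff {C : ℝ} (hC : 0 ≤ C)
    (R : Matrix (Fin m) (Fin n) ℝ) (hR : ∀ s a, |R s a| ≤ C)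
    (d f : Matrix (Fin m) (Fin n) ℝ) (s : Fin m) :
    |Rvec R d s - Rvec R f s| ≤ C * rowSumNorm (d - f) := by
  calc |Rvec R d s - Rvec R f s| ≤ ∑ a, C * |d s a - f s a| := by
        simp only [Rvec, ← Finset.sum_sub_distrib]
        refine (Finset.abs_sum_le_sum_abs _ _).trans (Finset.sum_le_sum fun a _ => ?_)
        rw [← mul_sub, abs_mul]
        exact mul_le_mul_of_nonneg_right (hR s a) (abs_nonneg _)
    _ = C * ∑ a, |(d - f) s a| := by rw [Finset.mul_sum]; simp [Matrix.sub_apply]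
    _ ≤ C * rowSumNorm (d - f) :=
        mul_le_mul_of_nonneg_left (aux_le_rowSumNorm _ s) hC

/-- Arithmetic: the double geometric sum bound. -/
lemma aux_arith {β δ : ℝ} (hβ0 : 0 < β) (hβ1 : β < 1) (hδ0 : 0 < δ) (T : ℕ) :
    ∑ t ∈ Finset.range T, β ^ t * ∑ k ∈ Finset.range (t + 1), (δ ^ k)⁻¹ ≤
      (∑ k ∈ Finset.range T, (β / δ) ^ k) * (1 - β)⁻¹ := by
  have h1β : (0:ℝ) < 1 - β := by linarith
  have hgeom : ∀ N : ℕ, ∑ j ∈ Finset.range N, β ^ j ≤ (1 - β)⁻¹ := by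
    intro N
    rw [geom_sum_eq hβ1.ne, ← neg_div_neg_eq, neg_sub, neg_sub, ← one_div]
    refine div_le_div₀ zero_le_one ?_ h1β le_rfl
    have : 0 ≤ β ^ N := pow_nonneg hβ0.le N
    linarith
  calc ∑ t ∈ Finset.range T, β ^ t * ∑ k ∈ Finset.range (t + 1), (δ ^ k)⁻¹
      = ∑ t ∈ Finset.Ico 0 T, ∑ k ∈ Finset.Ico 0 (t + 1), (δ ^ k)⁻¹ * β ^ t := by
        simp_rw [Finset.range_eq_Ico, Finset.mul_sum]
        refine Finset.sum_congr rfl fun t _ => Finset.sum_congr rfl fun k _ => mul_comm _ _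
    _ = ∑ k ∈ Finset.Ico 0 T, ∑ t ∈ Finset.Ico k T, (δ ^ k)⁻¹ * β ^ t :=
        (Finset.sum_Ico_Ico_comm 0 T fun k t => (δ ^ k)⁻¹ * β ^ t).symm
    _ = ∑ k ∈ Finset.range T, (δ ^ k)⁻¹ * (β ^ k * ∑ j ∈ Finset.range (T - k), β ^ j) := by
        rw [← Finset.range_eq_Ico]
        refine Finset.sum_congr rfl fun k _ => ?_
        rw [← Finset.mul_sum, Finset.sum_Ico_eq_sum_range]
        simp_rw [pow_add, Finset.mul_sum]
    _ ≤ ∑ k ∈ Finset.range T, (β / δ) ^ k * (1 - β)⁻¹ := by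
        refine Finset.sum_le_sum fun k _ => ?_
        calc (δ ^ k)⁻¹ * (β ^ k * ∑ j ∈ Finset.range (T - k), β ^ j)
            ≤ (δ ^ k)⁻¹ * (β ^ k * (1 - β)⁻¹) :=
              mul_le_mul_of_nonneg_left
                (mul_le_mul_of_nonneg_left (hgeom _) (pow_nonneg hβ0.le k))
                (inv_nonneg.2 (pow_nonneg hδ0.le k))
          _ = (β / δ) ^ k * (1 - β)⁻¹ := by rw [div_pow, div_eq_mul_inv]; ring
    _ = (∑ k ∈ Finset.range T, (β / δ) ^ k) * (1 - β)⁻¹ := by rw [Finset.sum_mul]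

lemma aux_final_eq {β δ : ℝ} (hβ0 : 0 < β) (hδβ : β < δ) (T : ℕ) (hT : 1 ≤ T) :
    (δ ^ T - β ^ T) / (δ ^ (T - 1) * (δ - β)) = ∑ k ∈ Finset.range T, (β / δ) ^ k := by
  obtain ⟨S, rfl⟩ : ∃ S, T = S + 1 := ⟨T - 1, (Nat.succ_pred_eq_of_pos hT).symm⟩
  have hδ0 : (0:ℝ) < δ := hβ0.trans hδβ
  have hne : β / δ ≠ 1 := by
    have : β / δ < 1 := (div_lt_one hδ0).2 hδβ
    exact this.ne
  rw [geom_sum_eq hne]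
  have hδne : δ ≠ 0 := hδ0.ne'
  have hδβne : δ - β ≠ 0 := by intro h; apply absurd hδβ; linarith [sub_eq_zero.mp h]
  simp only [Nat.add_sub_cancel]
  rw [div_eq_div_iff (by positivity) ?_]
  · rw [div_pow]
    field_simp
    ring
  · rw [div_sub_one hδne]
    have hβδ : β - δ ≠ 0 := by intro h; apply absurd hδβ; linarith [sub_eq_zero.mp h]
    exact div_ne_zero hβδ hδne

end Aux

/-- the map `π ↦ V_T(π,R)` is Lipschitz with constant
`K(δ^T − β^T)/(δ^{T−1}(δ − β))` with respect to the metric `μ`. -/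
theorem stmt_5 (m n : ℕ) (hm : 1 ≤ m) (hn : 1 ≤ n)
    (p : Fin m → Fin n → Fin m → ℝ) (hp : IsTransKer m n p)
    (β : ℝ) (hβ0 : 0 < β) (hβ1 : β < 1)
    (C : ℝ) (hC : 0 < C)
    (δ : ℝ) (hδ : β < δ) (hδ1 : δ < 1)
    (R : Matrix (Fin m) (Fin n) ℝ) (hR : ∀ s a, |R s a| ≤ C)
    (T : ℕ) (hT : 1 ≤ T)
    (π₁ π₂ : ℕ → Matrix (Fin m) (Fin n) ℝ)
    (h₁ : ∀ t, IsStoch m n (π₁ t)) (h₂ : ∀ t, IsStoch m n (π₂ t)) :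
    vecNorm (VT β p π₁ R T - VT β p π₂ R T) ≤
      C / (1 - β) * (δ ^ T - β ^ T) / (δ ^ (T - 1) * (δ - β)) * policyDist δ π₁ π₂ := by
  have hne : Nonempty (Fin m) := ⟨⟨0, hm⟩⟩
  have hδ0 : (0:ℝ) < δ := hβ0.trans hδ
  set μ := policyDist δ π₁ π₂ with hμdef
  have hμ0 : 0 ≤ μ := aux_policyDist_nonneg hm hδ0 π₁ π₂
  -- rowSumNorm bound from the metric
  have hrs : ∀ t, rowSumNorm (π₁ t - π₂ t) ≤ (δ ^ t)⁻¹ * μ := by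
    intro t
    have h := aux_le_policyDist hm hδ0 hδ1 h₁ h₂ t
    have hpow : (0:ℝ) < δ ^ t := pow_pos hδ0 t
    rw [inv_mul_eq_div, le_div_iff₀ hpow, mul_comm]
    exact h
  -- per-coordinate, per-time bound
  have key : ∀ (t : ℕ) (x : Fin m),
      |(Ppi p π₁ t *ᵥ Rvec R (π₁ t)) x - (Ppi p π₂ t *ᵥ Rvec R (π₂ t)) x| ≤
        C * μ * ∑ k ∈ Finset.range (t + 1), (δ ^ k)⁻¹ := by
    intro t x
    have hP1 := aux_Ppi_stoch p hp π₁ h₁ t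
    calc |(Ppi p π₁ t *ᵥ Rvec R (π₁ t)) x - (Ppi p π₂ t *ᵥ Rvec R (π₂ t)) x|
        ≤ ∑ y, (Ppi p π₁ t x y * |Rvec R (π₁ t) y - Rvec R (π₂ t) y|
            + |Ppi p π₁ t x y - Ppi p π₂ t x y| * |Rvec R (π₂ t) y|) := by
          simp only [Matrix.mulVec, dotProduct, ← Finset.sum_sub_distrib]
          refine (Finset.abs_sum_le_sum_abs _ _).trans (Finset.sum_le_sum fun y _ => ?_)
          have : Ppi p π₁ t x y * Rvec R (π₁ t) y - Ppi p π₂ t x y * Rvec R (π₂ t) y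
              = Ppi p π₁ t x y * (Rvec R (π₁ t) y - Rvec R (π₂ t) y)
                + (Ppi p π₁ t x y - Ppi p π₂ t x y) * Rvec R (π₂ t) y := by ring
          rw [this]
          refine (abs_add_le _ _).trans ?_
          rw [abs_mul, abs_mul, abs_of_nonneg (hP1.1 x y)]
      _ ≤ ∑ y, Ppi p π₁ t x y * (C * ((δ ^ t)⁻¹ * μ))
            + ∑ y, |Ppi p π₁ t x y - Ppi p π₂ t x y| * C := by
          rw [← Finset.sum_add_distrib]
          refine Finset.sum_le_sum fun y _ => add_le_add ?_ ?_
          · refine mul_le_mul_of_nonneg_left ?_ (hP1.1 x y)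
            exact (aux_Rvec_diff hC.le R hR _ _ y).trans
              (mul_le_mul_of_nonneg_left (hrs t) hC.le)
          · exact mul_le_mul_of_nonneg_left (aux_Rvec_abs_le R hR (h₂ t) y) (abs_nonneg _)
      _ ≤ C * ((δ ^ t)⁻¹ * μ) + (∑ k ∈ Finset.range t, (δ ^ k)⁻¹ * μ) * C := by
          refine add_le_add (le_of_eq ?_) ?_
          · rw [← Finset.sum_mul, hP1.2 x, one_mul]
          · rw [← Finset.sum_mul]
            refine mul_le_mul_of_nonneg_right ?_ hC.le
            refine (aux_Ppi_diff hm p hp π₁ π₂ h₁ h₂ t x).trans ?_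
            exact Finset.sum_le_sum fun k _ => hrs k
      _ = C * μ * ∑ k ∈ Finset.range (t + 1), (δ ^ k)⁻¹ := by
          have h1 : ∑ k ∈ Finset.range t, (δ ^ k)⁻¹ * μ
              = μ * ∑ k ∈ Finset.range t, (δ ^ k)⁻¹ := by
            rw [Finset.mul_sum]; exact Finset.sum_congr rfl fun k _ => mul_comm _ _
          rw [Finset.sum_range_succ, h1, mul_add]; ring
  -- per-coordinate bound on the value difference
  have main : ∀ x : Fin m,
      |(VT β p π₁ R T - VT β p π₂ R T) x| ≤
        C / (1 - β) * (δ ^ T - β ^ T) / (δ ^ (T - 1) * (δ - β)) * μ := by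
    intro x
    have h1β : (0:ℝ) < 1 - β := by linarith
    calc |(VT β p π₁ R T - VT β p π₂ R T) x|
        = |∑ t ∈ Finset.range T,
            β ^ t * ((Ppi p π₁ t *ᵥ Rvec R (π₁ t)) x - (Ppi p π₂ t *ᵥ Rvec R (π₂ t)) x)| := by
          simp only [Pi.sub_apply, VT, ← Finset.sum_sub_distrib, mul_sub]
      _ ≤ ∑ t ∈ Finset.range T,
            β ^ t * (C * μ * ∑ k ∈ Finset.range (t + 1), (δ ^ k)⁻¹) := by
          refine (Finset.abs_sum_le_sum_abs _ _).trans (Finset.sum_le_sum fun t _ => ?_)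
          rw [abs_mul, abs_of_nonneg (pow_nonneg hβ0.le t)]
          exact mul_le_mul_of_nonneg_left (key t x) (pow_nonneg hβ0.le t)
      _ = C * μ * ∑ t ∈ Finset.range T,
            β ^ t * ∑ k ∈ Finset.range (t + 1), (δ ^ k)⁻¹ := by
          rw [Finset.mul_sum]
          exact Finset.sum_congr rfl fun t _ => by ring
      _ ≤ C * μ * ((∑ k ∈ Finset.range T, (β / δ) ^ k) * (1 - β)⁻¹) := by
          refine mul_le_mul_of_nonneg_left (aux_arith hβ0 hβ1 hδ0 T)
            (mul_nonneg hC.le hμ0)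
      _ = C / (1 - β) * (δ ^ T - β ^ T) / (δ ^ (T - 1) * (δ - β)) * μ := by
          rw [← aux_final_eq hβ0 hδ T hT]
          ring
  -- conclude via the sup over coordinates
  refine ciSup_le fun x => (main x)
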